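/- Let G be a group whose Z±-power graph 𝒢±(G) is isomorphic to the Z±-power graph of the additive group (ℚ,+). Then every isomorphism from 𝒢±(G) to 𝒢±(ℚ,+) is either an isomorphism or an anti-isomorphism from the directed Z±-power graph of G to the directed Z±-power graph of (ℚ,+); in particular, the directed Z±-power graphs of G and (ℚ,+) are isomorphic. -/

import Mathlib

set_option linter.unusedVariables false

/-- The power graph of a group: distinct `x, y` adjacent iff one is an integer power of the other. -/
def powerGraph (G : Type*) [Group G] : SimpleGraph G where
  Adj x y := x ≠ y ∧ ∃ n : ℤ, y = x ^ n ∨ x = y ^ n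
  symm := ⟨fun x y ⟨hxy, n, h⟩ => ⟨hxy.symm, n, h.symm⟩⟩
  loopless := ⟨fun x ⟨h, _⟩ => h rfl⟩

/-- The Z±-power graph of a group: distinct `x, y` adjacent iff one is a nonzero integer power
of the other. -/
def zpmPowerGraph (G : Type*) [Group G] : SimpleGraph G where
  Adj x y := x ≠ y ∧ ∃ n : ℤ, n ≠ 0 ∧ (y = x ^ n ∨ x = y ^ n)
  symm := ⟨fun x y ⟨hxy, n, hn, h⟩ => ⟨hxy.symm, n, hn, h.symm⟩⟩
  loopless := ⟨fun x ⟨h, _⟩ => h rfl⟩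

/-- The N-power graph of a group: distinct `x, y` adjacent iff one is a positive-integer power
of the other. -/
def nPowerGraph (G : Type*) [Group G] : SimpleGraph G where
  Adj x y := x ≠ y ∧ ∃ n : ℕ, 0 < n ∧ (y = x ^ n ∨ x = y ^ n)
  symm := ⟨fun x y ⟨hxy, n, hn, h⟩ => ⟨hxy.symm, n, hn, h.symm⟩⟩
  loopless := ⟨fun x ⟨h, _⟩ => h rfl⟩

/-- The closed neighborhood of a vertex in a graph. -/
def closedNbhd {V : Type*} (Γ : SimpleGraph V) (x : V) : Set V :=
  insert x {y | Γ.Adj x y}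

/-- The center of a graph: the set of vertices adjacent to every other vertex. -/
def graphCenter {V : Type*} (Γ : SimpleGraph V) : Set V :=
  {x | ∀ y, y ≠ x → Γ.Adj x y}

/-- The directed Z±-power graph, as a relation: `x → y` iff `x ≠ y` and `y` is a nonzero
integer power of `x`. -/
def dirZpm (G : Type*) [Group G] : G → G → Prop :=
  fun x y => x ≠ y ∧ ∃ n : ℤ, n ≠ 0 ∧ y = x ^ n

/-- The Z±-power graph of the additive group `(ℚ, +)`: distinct `x, y` adjacent iff one is a
nonzero integer multiple of the other. -/
def zpmQ : SimpleGraph ℚ where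
  Adj x y := x ≠ y ∧ ∃ n : ℤ, n ≠ 0 ∧ (y = n • x ∨ x = n • y)
  symm := ⟨fun x y ⟨hxy, n, hn, h⟩ => ⟨hxy.symm, n, hn, h.symm⟩⟩
  loopless := ⟨fun x ⟨h, _⟩ => h rfl⟩

/-- The directed Z±-power graph of `(ℚ, +)`: `x → y` iff `x ≠ y` and `y = n • x` for some
nonzero integer `n`. -/
def dirQ : ℚ → ℚ → Prop :=
  fun x y => x ≠ y ∧ ∃ n : ℤ, n ≠ 0 ∧ y = n • x

/-- `O_ℚ(x)`: direct successors of `x` in the directed Z±-power graph of `(ℚ,+)`, excluding `-x`. -/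
def OsuccQ (x : ℚ) : Set ℚ :=
  {y | y ≠ x ∧ y ≠ -x ∧ ∃ n : ℤ, n ≠ 0 ∧ y = n • x}

/-- `I_ℚ(x)`: direct predecessors of `x` in the directed Z±-power graph of `(ℚ,+)`, excluding `-x`. -/
def IpredQ (x : ℚ) : Set ℚ :=
  {y | y ≠ x ∧ y ≠ -x ∧ ∃ n : ℤ, n ≠ 0 ∧ x = n • y}

section ZpmAux

open SimpleGraph

lemma qsmul_eq (n : ℤ) (x : ℚ) : n • x = (n : ℚ) * x := zsmul_eq_mul x n

lemma q_mul_den (x : ℚ) : x * (x.den : ℚ) = (x.num : ℚ) := by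
  have h : (x.den : ℚ) ≠ 0 := Nat.cast_ne_zero.mpr x.den_ne_zero
  nth_rewrite 1 [← Rat.num_div_den x]
  rw [div_mul_cancel₀ (x.num : ℚ) h]

lemma zero_not_adjQ (y : ℚ) : ¬ zpmQ.Adj 0 y := by
  rintro ⟨hne, n, hn, h | h⟩
  · rw [smul_zero] at h
    exact hne h.symm
  · rw [qsmul_eq] at h
    rcases mul_eq_zero.mp h.symm with h' | h'
    · exact hn (by exact_mod_cast h')
    · exact hne h'.symm

lemma exists_prime_gt (k k' : ℤ) : ∃ p : ℤ, Prime p ∧ |k| < p ∧ |k'| < p := by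
  obtain ⟨p, hle, hp⟩ := Nat.exists_infinite_primes (k.natAbs ⊔ k'.natAbs + 1)
  refine ⟨(p : ℤ), Nat.prime_iff_prime_int.mp hp, ?_, ?_⟩
  · rw [Int.abs_eq_natAbs]
    have : k.natAbs < p := by omega
    exact_mod_cast this
  · rw [Int.abs_eq_natAbs]
    have : k'.natAbs < p := by omega
    exact_mod_cast this

lemma not_dvd_of_prime_lt {k p : ℤ} (hk : 2 ≤ |k|) (hp : Prime p) (h2 : |k| < p) :
    ¬ k ∣ p ∧ ¬ p ∣ k := by
  have hk0 : k ≠ 0 := by rintro rfl; simp at hk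
  have hppos : 0 < p := lt_of_le_of_lt (abs_nonneg k) h2
  constructor
  · intro hd
    have hd' : k.natAbs ∣ p.natAbs := Int.natAbs_dvd_natAbs.mpr hd
    have hpn : Nat.Prime p.natAbs := Int.prime_iff_natAbs_prime.mp hp
    rcases (Nat.Prime.eq_one_or_self_of_dvd hpn _ hd') with h | h
    · have : |k| = 1 := by rw [Int.abs_eq_natAbs, h]; rfl
      omega
    · have : |k| = |p| := by rw [Int.abs_eq_natAbs, Int.abs_eq_natAbs, h]
      rw [abs_of_pos hppos] at this
      omega
  · intro hd
    have : p ∣ |k| := (dvd_abs p k).mpr hd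
    have := Int.le_of_dvd (by omega) this
    omega

lemma two_le_abs_helper {n : ℤ} (h0 : n ≠ 0) (h1 : n ≠ 1) (h2 : n ≠ -1) : 2 ≤ |n| := by
  rcases abs_cases n with ⟨h, _⟩ | ⟨h, _⟩ <;> omega

lemma two_le_abs_mul {a b : ℤ} (ha : a ≠ 0) (hb : b ≠ 0) : 2 ≤ |2 * a * b| := by
  rw [abs_mul, abs_mul, abs_two]
  have h1 := Int.one_le_abs ha
  have h2 := Int.one_le_abs hb
  nlinarith [abs_nonneg a, abs_nonneg b]

lemma dirQ_inv_mp {u v : ℚ} (h : dirQ u v) : dirQ v⁻¹ u⁻¹ := by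
  obtain ⟨hne, n, hn, he⟩ := h
  have hu : u ≠ 0 := by rintro rfl; rw [smul_zero] at he; exact hne he.symm
  have hnQ : (n : ℚ) ≠ 0 := Int.cast_ne_zero.mpr hn
  have hv : v ≠ 0 := by rw [he, qsmul_eq]; exact mul_ne_zero hnQ hu
  refine ⟨fun hh => hne (inv_injective hh).symm, n, hn, ?_⟩
  rw [qsmul_eq, he, qsmul_eq, mul_inv, ← mul_assoc, mul_inv_cancel₀ hnQ, one_mul]

lemma dirQ_inv_iff (u v : ℚ) : dirQ u v ↔ dirQ v⁻¹ u⁻¹ := by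
  refine ⟨dirQ_inv_mp, fun h => ?_⟩
  have := dirQ_inv_mp h
  rwa [inv_inv, inv_inv] at this

/-- twins in `zpmQ` are negatives -/
lemma Qtwins_aux (x x' : ℚ) (hx : x ≠ 0) (n : ℤ) (hn : 2 ≤ |n|) (he : x' = n • x)
    (htw : ∀ w, w ≠ x → w ≠ x' → (zpmQ.Adj x w ↔ zpmQ.Adj x' w)) : False := by
  obtain ⟨p, hp, hnp, -⟩ := exists_prime_gt n n
  obtain ⟨hnd, hpd⟩ := not_dvd_of_prime_lt hn hp hnp
  have hp2 : (2 : ℤ) ≤ p := by omega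
  set w : ℚ := (p : ℤ) • x with hw
  have hn0 : n ≠ 0 := by rintro rfl; simp at hn
  have hw_ne_x : w ≠ x := by
    rw [hw, qsmul_eq]
    intro hcon
    have : ((p : ℚ) - 1) * x = 0 := by ring_nf; linear_combination hcon
    rcases mul_eq_zero.mp this with h' | h'
    · have : (p : ℚ) = 1 := by linear_combination h'
      have : p = 1 := by exact_mod_cast this
      omega
    · exact hx h'
  have hw_ne_x' : w ≠ x' := by
    rw [hw, he, qsmul_eq, qsmul_eq]
    intro hcon
    have : (p : ℚ) = (n : ℚ) := mul_right_cancel₀ hx hcon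
    have : p = n := by exact_mod_cast this
    rcases abs_cases n with ⟨h1,h2⟩ | ⟨h1,h2⟩ <;> omega
  have hadj : zpmQ.Adj x w := ⟨hw_ne_x.symm, p, by omega, Or.inl rfl⟩
  obtain ⟨hne, m, hm, hor⟩ := (htw w hw_ne_x hw_ne_x').mp hadj
  rcases hor with h | h
  · -- w = m • x' : p • x = m • (n • x) ⇒ p = m * n ⇒ n ∣ p
    rw [hw, he, qsmul_eq, qsmul_eq, qsmul_eq, ← mul_assoc] at h
    have : (p : ℚ) = ((m * n : ℤ) : ℚ) := by push_cast; exact mul_right_cancel₀ hx h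
    have : p = m * n := by exact_mod_cast this
    exact hnd ⟨m, by linarith [this]⟩
  · -- x' = m • w : n • x = m • (p • x) ⇒ n = m * p ⇒ p ∣ n
    rw [hw, he, qsmul_eq, qsmul_eq, qsmul_eq, ← mul_assoc] at h
    have : (n : ℚ) = ((m * p : ℤ) : ℚ) := by push_cast; exact mul_right_cancel₀ hx h
    have : n = m * p := by exact_mod_cast this
    exact hpd ⟨m, by linarith [this]⟩

lemma Qtwins (x x' : ℚ) (hadj : zpmQ.Adj x x')
    (htw : ∀ w, w ≠ x → w ≠ x' → (zpmQ.Adj x w ↔ zpmQ.Adj x' w)) : x' = -x := by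
  obtain ⟨hne, n, hn, hor⟩ := hadj
  have hnQ : (n : ℚ) ≠ 0 := Int.cast_ne_zero.mpr hn
  have hx : x ≠ 0 := by
    rintro rfl
    rcases hor with h | h
    · rw [smul_zero] at h; exact hne h.symm
    · rw [qsmul_eq] at h
      rcases mul_eq_zero.mp h.symm with h' | h'
      · exact hnQ h'
      · exact hne h'.symm
  have hx' : x' ≠ 0 := by
    rintro rfl
    rcases hor with h | h
    · rw [qsmul_eq] at h
      rcases mul_eq_zero.mp h.symm with h' | h'
      · exact hnQ h'
      · exact hne h'
    · rw [smul_zero] at h; exact hne h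
  by_contra hnx
  rcases hor with h | h
  · have h1 : n ≠ 1 := by rintro rfl; rw [one_smul] at h; exact hne h.symm
    have h2 : n ≠ -1 := by
      rintro rfl
      rw [qsmul_eq] at h; push_cast at h
      exact hnx (by linarith [h])
    exact Qtwins_aux x x' hx n (two_le_abs_helper hn h1 h2) h htw
  · have h1 : n ≠ 1 := by rintro rfl; rw [one_smul] at h; exact hne h
    have h2 : n ≠ -1 := by
      rintro rfl
      rw [qsmul_eq] at h; push_cast at h
      exact hnx (by linarith [h])
    exact Qtwins_aux x' x hx' n (two_le_abs_helper hn h1 h2) h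
      (fun w hw1 hw2 => (htw w hw2 hw1).symm)

end ZpmAux
section ZpmG

variable {G : Type*} [Group G]

lemma zpow_two' (a : G) : a ^ (2 : ℤ) = a * a := by
  rw [(by norm_num : (2:ℤ) = 1 + 1), zpow_add, zpow_one]

lemma phi_one (φ : zpmPowerGraph G ≃g zpmQ) : φ 1 = 0 := by
  set a := φ.symm 0 with ha
  have hfa : φ a = 0 := φ.apply_symm_apply 0
  have key : a = 1 := by
    by_contra ha1
    by_cases h2 : a⁻¹ = a
    · have hsq : a * a = 1 := by nth_rewrite 1 [← h2]; exact inv_mul_cancel a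
      have hadj : (zpmPowerGraph G).Adj a 1 :=
        ⟨ha1, 2, by norm_num, Or.inl (by rw [zpow_two', hsq])⟩
      have := φ.map_rel_iff.mpr hadj
      rw [hfa] at this
      exact zero_not_adjQ _ this
    · have hadj : (zpmPowerGraph G).Adj a a⁻¹ :=
        ⟨fun h => h2 h.symm, -1, by norm_num, Or.inl (zpow_neg_one a).symm⟩
      have := φ.map_rel_iff.mpr hadj
      rw [hfa] at this
      exact zero_not_adjQ _ this
  rw [← key, hfa]

lemma tf (φ : zpmPowerGraph G ≃g zpmQ) (g : G) (hg : g ≠ 1) (n : ℤ) (hgn : g ^ n = 1) :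
    n = 0 := by
  by_contra hn
  have hadj : (zpmPowerGraph G).Adj g 1 := ⟨hg, n, hn, Or.inl hgn.symm⟩
  have := φ.map_rel_iff.mpr hadj
  rw [phi_one φ] at this
  exact zero_not_adjQ _ this.symm

lemma phi_ne_zero (φ : zpmPowerGraph G ≃g zpmQ) (g : G) (hg : g ≠ 1) : φ g ≠ 0 := by
  intro h
  exact hg (φ.toEquiv.injective (h.trans (phi_one φ).symm))

lemma both_dir (φ : zpmPowerGraph G ≃g zpmQ) {a b : G} (h1 : dirZpm G a b)
    (h2 : dirZpm G b a) : b = a⁻¹ := by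
  obtain ⟨hab, n, hn, hb⟩ := h1
  obtain ⟨hba, m, hm, ha⟩ := h2
  have ha1 : a ≠ 1 := by rintro rfl; rw [one_zpow] at hb; exact hab hb.symm
  have h3 : a ^ (n * m) = a := by rw [zpow_mul, ← hb, ← ha]
  have h4 : a ^ (n * m - 1) = 1 := by rw [zpow_sub, zpow_one, h3]; exact mul_inv_cancel a
  have h5 := tf φ a ha1 _ h4
  have h6 : n * m = 1 := by omega
  rcases Int.mul_eq_one_iff_eq_one_or_neg_one.mp h6 with ⟨hn1, -⟩ | ⟨hn1, -⟩
  · rw [hn1, zpow_one] at hb; exact absurd hb.symm hab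
  · rw [hn1, zpow_neg_one] at hb; exact hb

lemma adj_inv_left {a z : G} (h : (zpmPowerGraph G).Adj a z) (hz : z ≠ a⁻¹) :
    (zpmPowerGraph G).Adj a⁻¹ z := by
  obtain ⟨h1, n, hn, hor⟩ := h
  refine ⟨fun hh => hz hh.symm, -n, neg_ne_zero.mpr hn, ?_⟩
  rcases hor with h | h
  · exact Or.inl (by rw [h, inv_zpow, zpow_neg, inv_inv])
  · exact Or.inr (by rw [zpow_neg, ← h])

lemma phi_inv (φ : zpmPowerGraph G ≃g zpmQ) (a : G) (ha : a ≠ 1) : φ a⁻¹ = - φ a := by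
  have hai : a⁻¹ ≠ a := by
    intro h
    have hsq : a ^ (2:ℤ) = 1 := by
      rw [zpow_two']; nth_rewrite 1 [← h]; exact inv_mul_cancel a
    have := tf φ a ha _ hsq
    norm_num at this
  have hadjG : (zpmPowerGraph G).Adj a a⁻¹ :=
    ⟨fun h => hai h.symm, -1, by norm_num, Or.inl (zpow_neg_one a).symm⟩
  apply Qtwins (φ a) (φ a⁻¹) (φ.map_rel_iff.mpr hadjG)
  intro w hw hw'
  have hwz : φ (φ.symm w) = w := φ.apply_symm_apply w
  have hza : φ.symm w ≠ a := fun h => hw (by rw [← hwz, h])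
  have hza' : φ.symm w ≠ a⁻¹ := fun h => hw' (by rw [← hwz, h])
  rw [← hwz, φ.map_rel_iff, φ.map_rel_iff]
  constructor
  · intro h
    exact adj_inv_left h hza'
  · intro h
    have h2 := adj_inv_left h (show φ.symm w ≠ (a⁻¹)⁻¹ by rw [inv_inv]; exact hza)
    rwa [inv_inv] at h2

end ZpmG
section PB

variable {G : Type*} [Group G]

lemma q_cancel {a b x : ℚ} (hx : x ≠ 0) (h : a * x = b * x) : a = b :=
  mul_right_cancel₀ hx h

/-- the pullback along `φ.symm` of the directed power relation of `G` to `ℚ`. -/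
def pbRel (φ : zpmPowerGraph G ≃g zpmQ) (x y : ℚ) : Prop :=
  dirZpm G (φ.symm x) (φ.symm y)

lemma pb_apply (φ : zpmPowerGraph G ≃g zpmQ) (a b : G) :
    pbRel φ (φ a) (φ b) ↔ dirZpm G a b := by
  unfold pbRel
  rw [φ.symm_apply_apply, φ.symm_apply_apply]

lemma pb_trans (φ : zpmPowerGraph G ≃g zpmQ) {x y z : ℚ} (h1 : pbRel φ x y)
    (h2 : pbRel φ y z) : x = z ∨ pbRel φ x z := by
  obtain ⟨hab, n, hn, hb⟩ := h1
  obtain ⟨hbc, m, hm, hc⟩ := h2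
  by_cases hxz : φ.symm x = φ.symm z
  · left
    rw [← φ.apply_symm_apply x, hxz, φ.apply_symm_apply]
  · right
    exact ⟨hxz, n * m, mul_ne_zero hn hm, by rw [zpow_mul, ← hb, ← hc]⟩

lemma pb_adj (φ : zpmPowerGraph G ≃g zpmQ) {x y : ℚ} (h : pbRel φ x y) : zpmQ.Adj x y := by
  obtain ⟨hne, n, hn, hb⟩ := h
  have h2 : (zpmPowerGraph G).Adj (φ.symm x) (φ.symm y) := ⟨hne, n, hn, Or.inl hb⟩
  have h3 := φ.map_rel_iff.mpr h2
  rwa [φ.apply_symm_apply, φ.apply_symm_apply] at h3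

lemma pb_or (φ : zpmPowerGraph G ≃g zpmQ) {x : ℚ} (hx : x ≠ 0) {k : ℤ} (hk : 2 ≤ |k|) :
    pbRel φ x (k • x) ∨ pbRel φ (k • x) x := by
  have hk0 : k ≠ 0 := by rintro rfl; simp at hk
  have hk1 : k ≠ 1 := by rintro rfl; simp at hk
  have hne : x ≠ k • x := by
    rw [qsmul_eq]
    intro h
    have h2 : ((k : ℚ) - 1) * x = 0 := by linear_combination -h
    rcases mul_eq_zero.mp h2 with h' | h'
    · have : (k : ℚ) = 1 := by linarith
      exact hk1 (by exact_mod_cast this)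
    · exact hx h'
  have hadj : zpmQ.Adj x (k • x) := ⟨hne, k, hk0, Or.inl rfl⟩
  have hadjG := (RelIso.map_rel_iff φ.symm).mpr hadj
  obtain ⟨hne', n, hn, hor⟩ := hadjG
  rcases hor with h | h
  · exact Or.inl ⟨hne', n, hn, h⟩
  · exact Or.inr ⟨fun hh => hne' hh.symm, n, hn, h⟩

lemma pb_not_both (φ : zpmPowerGraph G ≃g zpmQ) {x : ℚ} (hx : x ≠ 0) {k : ℤ} (hk : 2 ≤ |k|)
    (h1 : pbRel φ x (k • x)) (h2 : pbRel φ (k • x) x) : False := by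
  have hb := both_dir φ h1 h2
  have ha1 : φ.symm x ≠ 1 := by
    intro h
    apply hx
    rw [← φ.apply_symm_apply x, h, phi_one φ]
  have hinv := phi_inv φ (φ.symm x) ha1
  rw [φ.apply_symm_apply] at hinv
  have hkx : k • x = -x := by
    rw [← φ.apply_symm_apply (k • x), hb, hinv]
  rw [qsmul_eq] at hkx
  have h3 : ((k : ℚ) + 1) * x = 0 := by linear_combination hkx
  rcases mul_eq_zero.mp h3 with h' | h'
  · have : (k : ℚ) = -1 := by linarith
    have : k = -1 := by exact_mod_cast this
    rcases abs_cases k with ⟨u1, u2⟩ | ⟨u1, u2⟩ <;> omega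
  · exact hx h'

lemma pb_force_bot (φ : zpmPowerGraph G ≃g zpmQ) {x : ℚ} (hx : x ≠ 0) {k k' : ℤ}
    (hk : 2 ≤ |k|) (hk' : 2 ≤ |k'|) (hd1 : ¬ k ∣ k') (hd2 : ¬ k' ∣ k)
    (h : pbRel φ x (k • x)) : pbRel φ x (k' • x) := by
  rcases pb_or φ hx hk' with h' | h'
  · exact h'
  · exfalso
    rcases pb_trans φ h' h with heq | hlt
    · apply hd1
      rw [qsmul_eq, qsmul_eq] at heq
      have : (k' : ℚ) = (k : ℚ) := mul_right_cancel₀ hx heq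
      have : k' = k := by exact_mod_cast this
      rw [this]
    · obtain ⟨hne, m, hm, hor⟩ := pb_adj φ hlt
      rcases hor with h'' | h''
      · -- k • x = m • (k' • x)
        apply hd2
        rw [qsmul_eq, qsmul_eq, qsmul_eq, ← mul_assoc] at h''
        have : (k : ℚ) = ((m * k' : ℤ) : ℚ) := by push_cast; exact mul_right_cancel₀ hx h''
        have : k = m * k' := by exact_mod_cast this
        exact ⟨m, by linarith⟩
      · -- k' • x = m • (k • x)
        apply hd1
        rw [qsmul_eq, qsmul_eq, qsmul_eq, ← mul_assoc] at h''
        have : (k' : ℚ) = ((m * k : ℤ) : ℚ) := by push_cast; exact mul_right_cancel₀ hx h''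
        have : k' = m * k := by exact_mod_cast this
        exact ⟨m, by linarith⟩

lemma pb_force_top (φ : zpmPowerGraph G ≃g zpmQ) {x y r : ℚ} (hx : x ≠ 0) {k k' : ℤ}
    (hk : 2 ≤ |k|) (hk' : 2 ≤ |k'|) (hd1 : ¬ k ∣ k') (hd2 : ¬ k' ∣ k)
    (hr : r = k • x) (hr' : r = k' • y) (h : pbRel φ x r) : pbRel φ y r := by
  have hk0 : (k : ℚ) ≠ 0 := Int.cast_ne_zero.mpr (by rintro rfl; simp at hk)
  have hk'0 : (k' : ℚ) ≠ 0 := Int.cast_ne_zero.mpr (by rintro rfl; simp at hk')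
  have hr0 : r ≠ 0 := by
    rw [hr, qsmul_eq]
    exact mul_ne_zero hk0 hx
  have hy : y ≠ 0 := by
    rintro rfl
    rw [smul_zero] at hr'
    exact hr0 hr'
  have h2 := pb_or φ hy hk'
  rw [← hr'] at h2
  rcases h2 with h' | h'
  · exact h'
  · exfalso
    rcases pb_trans φ h h' with heq | hlt
    · -- x = y, so k • x = k' • x
      apply hd2
      rw [heq, hr'] at hr
      rw [qsmul_eq, qsmul_eq] at hr
      have h5 : (k' : ℚ) = (k : ℚ) := mul_right_cancel₀ hy hr
      have h6 : k' = k := by exact_mod_cast h5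
      rw [h6]
    · obtain ⟨hne, m, hm, hor⟩ := pb_adj φ hlt
      rcases hor with h'' | h''
      · -- y = m • x; r = k' • (m • x) = k • x ⇒ k = k' * m
        apply hd2
        rw [h''] at hr'
        rw [hr'] at hr
        rw [qsmul_eq, qsmul_eq, qsmul_eq, ← mul_assoc] at hr
        have : ((k' * m : ℤ) : ℚ) = (k : ℚ) := by push_cast; exact mul_right_cancel₀ hx hr
        have : k' * m = k := by exact_mod_cast this
        exact ⟨m, by linarith⟩
      · -- x = m • y; r = k • (m • y) = k' • y ⇒ k' = k * m
        apply hd1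
        rw [h''] at hr
        rw [hr'] at hr
        rw [qsmul_eq, qsmul_eq, qsmul_eq, ← mul_assoc] at hr
        have : ((k * m : ℤ) : ℚ) = (k' : ℚ) := by push_cast; exact (mul_right_cancel₀ hy hr).symm
        have : k * m = k' := by exact_mod_cast this
        exact ⟨m, by linarith⟩

lemma prime_two_le_abs {p : ℤ} (hp : Prime p) : 2 ≤ |p| := by
  have h := (Int.prime_iff_natAbs_prime.mp hp).two_le
  rw [Int.abs_eq_natAbs]
  exact_mod_cast h

lemma pb_bot (φ : zpmPowerGraph G ≃g zpmQ) {x : ℚ} (hx : x ≠ 0) {k k' : ℤ}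
    (hk : 2 ≤ |k|) (hk' : 2 ≤ |k'|) : (pbRel φ x (k • x) ↔ pbRel φ x (k' • x)) := by
  obtain ⟨p, hp, h1, h2⟩ := exists_prime_gt k k'
  obtain ⟨ha1, ha2⟩ := not_dvd_of_prime_lt hk hp h1
  obtain ⟨hb1, hb2⟩ := not_dvd_of_prime_lt hk' hp h2
  have hpa : 2 ≤ |p| := prime_two_le_abs hp
  constructor
  · intro h
    exact pb_force_bot φ hx hpa hk' hb2 hb1 (pb_force_bot φ hx hk hpa ha1 ha2 h)
  · intro h
    exact pb_force_bot φ hx hpa hk ha2 ha1 (pb_force_bot φ hx hk' hpa hb1 hb2 h)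

end PB
section PB2

variable {G : Type*} [Group G]

lemma pb_top_mp (φ : zpmPowerGraph G ≃g zpmQ) {x y r : ℚ} (hx : x ≠ 0) (hy : y ≠ 0)
    {k k' : ℤ} (hk : 2 ≤ |k|) (hk' : 2 ≤ |k'|) (hr : r = k • x) (hr' : r = k' • y)
    (h : pbRel φ x r) : pbRel φ y r := by
  obtain ⟨p, hp, h1, h2⟩ := exists_prime_gt k k'
  obtain ⟨ha1, ha2⟩ := not_dvd_of_prime_lt hk hp h1
  obtain ⟨hb1, hb2⟩ := not_dvd_of_prime_lt hk' hp h2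
  have hpa : 2 ≤ |p| := prime_two_le_abs hp
  have hp0 : (p : ℚ) ≠ 0 := Int.cast_ne_zero.mpr (by rintro rfl; simp at hpa)
  have hk0 : (k : ℚ) ≠ 0 := Int.cast_ne_zero.mpr (by rintro rfl; simp at hk)
  have hr0 : r ≠ 0 := by rw [hr, qsmul_eq]; exact mul_ne_zero hk0 hx
  set z : ℚ := (p : ℚ)⁻¹ * r with hz
  have hz0 : z ≠ 0 := mul_ne_zero (inv_ne_zero hp0) hr0
  have hrz : r = p • z := by
    rw [hz, qsmul_eq, ← mul_assoc, mul_inv_cancel₀ hp0, one_mul]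
  have step1 : pbRel φ z r := pb_force_top φ hx hk hpa ha1 ha2 hr hrz h
  exact pb_force_top φ hz0 hpa hk' hb2 hb1 hrz hr' step1

lemma pb_top (φ : zpmPowerGraph G ≃g zpmQ) {x y r : ℚ} (hx : x ≠ 0) (hy : y ≠ 0)
    {k k' : ℤ} (hk : 2 ≤ |k|) (hk' : 2 ≤ |k'|) (hr : r = k • x) (hr' : r = k' • y) :
    pbRel φ x r ↔ pbRel φ y r :=
  ⟨pb_top_mp φ hx hy hk hk' hr hr', pb_top_mp φ hy hx hk' hk hr' hr⟩

lemma pb_global (φ : zpmPowerGraph G ≃g zpmQ) {x x' : ℚ} (hx : x ≠ 0) (hx' : x' ≠ 0)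
    {k k' : ℤ} (hk : 2 ≤ |k|) (hk' : 2 ≤ |k'|) :
    (pbRel φ x (k • x) ↔ pbRel φ x' (k' • x')) := by
  set m : ℤ := 2 * x'.num * x.den with hmdef
  set m' : ℤ := 2 * x.num * x'.den with hmdef'
  have hxnum : x.num ≠ 0 := Rat.num_ne_zero.mpr hx
  have hxnum' : x'.num ≠ 0 := Rat.num_ne_zero.mpr hx'
  have hxden : (x.den : ℤ) ≠ 0 := by exact_mod_cast x.den_ne_zero
  have hxden' : (x'.den : ℤ) ≠ 0 := by exact_mod_cast x'.den_ne_zero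
  have hm : 2 ≤ |m| := two_le_abs_mul hxnum' hxden
  have hm' : 2 ≤ |m'| := two_le_abs_mul hxnum hxden'
  have e1 : m • x = 2 * (x'.num : ℚ) * (x.num : ℚ) := by
    rw [qsmul_eq, hmdef]
    push_cast
    have hd := q_mul_den x
    linear_combination (2 * (x'.num : ℚ)) * hd
  have e2 : m' • x' = 2 * (x.num : ℚ) * (x'.num : ℚ) := by
    rw [qsmul_eq, hmdef']
    push_cast
    have hd := q_mul_den x'
    linear_combination (2 * (x.num : ℚ)) * hd
  have heq : m • x = m' • x' := by rw [e1, e2]; ring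
  calc pbRel φ x (k • x) ↔ pbRel φ x (m • x) := pb_bot φ hx hk hm
    _ ↔ pbRel φ x' (m • x) := pb_top φ hx hx' hm hm' rfl heq
    _ ↔ pbRel φ x' (k' • x') := by rw [heq]; exact pb_bot φ hx' hm' hk'

end PB2
section Main

variable {G : Type*} [Group G]

lemma main_pres (φ : zpmPowerGraph G ≃g zpmQ) (hs : pbRel φ (1:ℚ) ((2:ℤ) • (1:ℚ)))
    (a b : G) : dirZpm G a b ↔ dirQ (φ a) (φ b) := by
  by_cases hab : a = b
  · subst hab
    exact iff_of_false (fun h => h.1 rfl) (fun h => h.1 rfl)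
  by_cases hadj : (zpmPowerGraph G).Adj a b
  case neg =>
    refine iff_of_false ?_ ?_
    · rintro ⟨h1, n, hn, he⟩
      exact hadj ⟨h1, n, hn, Or.inl he⟩
    · rintro ⟨h1, n, hn, he⟩
      exact hadj (φ.map_rel_iff.mp ⟨h1, n, hn, Or.inl he⟩)
  case pos =>
  have ha1 : a ≠ 1 := by
    rintro rfl
    obtain ⟨h1, n, hn, he | he⟩ := hadj
    · rw [one_zpow] at he; exact h1 he.symm
    · exact hn (tf φ b (fun h => h1 h.symm) n he.symm)
  have hb1 : b ≠ 1 := by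
    rintro rfl
    obtain ⟨h1, n, hn, he | he⟩ := hadj
    · exact hn (tf φ a h1 n he.symm)
    · rw [one_zpow] at he; exact h1 he
  have hx0 : φ a ≠ 0 := phi_ne_zero φ a ha1
  have hy0 : φ b ≠ 0 := phi_ne_zero φ b hb1
  have hxy : φ a ≠ φ b := fun h => hab (φ.toEquiv.injective h)
  by_cases hinv : b = a⁻¹
  · refine iff_of_true ⟨hab, -1, by norm_num, by rw [hinv, zpow_neg_one]⟩
      ⟨hxy, -1, by norm_num, ?_⟩
    rw [hinv, phi_inv φ a ha1, qsmul_eq]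
    push_cast
    ring
  · have hyneg : φ b ≠ - φ a := fun h =>
      hinv (φ.toEquiv.injective (h.trans (phi_inv φ a ha1).symm))
    obtain ⟨-, n, hn, hor⟩ := φ.map_rel_iff.mpr hadj
    by_cases hc : ∃ m : ℤ, m ≠ 0 ∧ φ b = m • φ a
    · obtain ⟨m, hm0, hme⟩ := hc
      have hm1 : m ≠ 1 := by rintro rfl; rw [one_smul] at hme; exact hxy hme.symm
      have hmn1 : m ≠ -1 := by
        rintro rfl
        apply hyneg
        rw [hme, qsmul_eq]; push_cast; ring
      have hm2 : 2 ≤ |m| := two_le_abs_helper hm0 hm1 hmn1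
      have hpb := (pb_global φ (one_ne_zero : (1:ℚ) ≠ 0) hx0 (by norm_num) hm2).mp hs
      rw [← hme] at hpb
      exact iff_of_true ((pb_apply φ a b).mp hpb) ⟨hxy, m, hm0, hme⟩
    · have hme : φ a = n • φ b := by
        rcases hor with h | h
        · exact absurd ⟨n, hn, h⟩ hc
        · exact h
      have hn1 : n ≠ 1 := by rintro rfl; rw [one_smul] at hme; exact hxy hme
      have hnn1 : n ≠ -1 := by
        rintro rfl
        apply hyneg
        rw [qsmul_eq] at hme; push_cast at hme; linarith
      have hn2 : 2 ≤ |n| := two_le_abs_helper hn hn1 hnn1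
      have hpb := (pb_global φ (one_ne_zero : (1:ℚ) ≠ 0) hy0 (by norm_num) hn2).mp hs
      rw [← hme] at hpb
      have hd := (pb_apply φ b a).mp hpb
      refine iff_of_false ?_ ?_
      · intro hd'
        exact hinv (both_dir φ hd' hd)
      · rintro ⟨-, m, hm, he⟩
        exact hc ⟨m, hm, he⟩

lemma main_anti (φ : zpmPowerGraph G ≃g zpmQ) (hs : ¬ pbRel φ (1:ℚ) ((2:ℤ) • (1:ℚ)))
    (a b : G) : dirZpm G a b ↔ dirQ (φ b) (φ a) := by
  by_cases hab : a = b
  · subst hab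
    exact iff_of_false (fun h => h.1 rfl) (fun h => h.1 rfl)
  by_cases hadj : (zpmPowerGraph G).Adj a b
  case neg =>
    refine iff_of_false ?_ ?_
    · rintro ⟨h1, n, hn, he⟩
      exact hadj ⟨h1, n, hn, Or.inl he⟩
    · rintro ⟨h1, n, hn, he⟩
      exact hadj (φ.map_rel_iff.mp ⟨h1, n, hn, Or.inl he⟩).symm
  case pos =>
  have ha1 : a ≠ 1 := by
    rintro rfl
    obtain ⟨h1, n, hn, he | he⟩ := hadj
    · rw [one_zpow] at he; exact h1 he.symm
    · exact hn (tf φ b (fun h => h1 h.symm) n he.symm)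
  have hb1 : b ≠ 1 := by
    rintro rfl
    obtain ⟨h1, n, hn, he | he⟩ := hadj
    · exact hn (tf φ a h1 n he.symm)
    · rw [one_zpow] at he; exact h1 he
  have hx0 : φ a ≠ 0 := phi_ne_zero φ a ha1
  have hy0 : φ b ≠ 0 := phi_ne_zero φ b hb1
  have hxy : φ a ≠ φ b := fun h => hab (φ.toEquiv.injective h)
  by_cases hinv : b = a⁻¹
  · refine iff_of_true ⟨hab, -1, by norm_num, by rw [hinv, zpow_neg_one]⟩
      ⟨fun h => hxy h.symm, -1, by norm_num, ?_⟩
    rw [hinv, phi_inv φ a ha1, qsmul_eq]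
    push_cast
    ring
  · have hyneg : φ b ≠ - φ a := fun h =>
      hinv (φ.toEquiv.injective (h.trans (phi_inv φ a ha1).symm))
    obtain ⟨-, n, hn, hor⟩ := φ.map_rel_iff.mpr hadj
    by_cases hc : ∃ m : ℤ, m ≠ 0 ∧ φ b = m • φ a
    · obtain ⟨m, hm0, hme⟩ := hc
      have hm1 : m ≠ 1 := by rintro rfl; rw [one_smul] at hme; exact hxy hme.symm
      have hmn1 : m ≠ -1 := by
        rintro rfl
        apply hyneg
        rw [hme, qsmul_eq]; push_cast; ring
      have hm2 : 2 ≤ |m| := two_le_abs_helper hm0 hm1 hmn1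
      have hnpb : ¬ pbRel φ (φ a) (m • φ a) := fun hh =>
        hs ((pb_global φ hx0 (one_ne_zero : (1:ℚ) ≠ 0) hm2 (by norm_num)).mp hh)
      rcases pb_or φ hx0 hm2 with hh | hh
      · exact absurd hh hnpb
      · rw [← hme] at hh
        have hd := (pb_apply φ b a).mp hh
        refine iff_of_false ?_ ?_
        · intro hd'
          exact hinv (both_dir φ hd' hd)
        · rintro ⟨h1, m', hm', he⟩
          rw [hme, qsmul_eq, qsmul_eq, ← mul_assoc] at he
          have h2 : ((m' * m : ℤ) : ℚ) = 1 := by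
            push_cast
            exact mul_right_cancel₀ hx0 (by linear_combination -he)
          have h3 : m' * m = 1 := by exact_mod_cast h2
          rcases Int.mul_eq_one_iff_eq_one_or_neg_one.mp h3 with ⟨-, hm1'⟩ | ⟨-, hm1'⟩
          · exact hm1 hm1'
          · exact hmn1 hm1'
    · have hme : φ a = n • φ b := by
        rcases hor with h | h
        · exact absurd ⟨n, hn, h⟩ hc
        · exact h
      have hn1 : n ≠ 1 := by rintro rfl; rw [one_smul] at hme; exact hxy hme
      have hnn1 : n ≠ -1 := by
        rintro rfl
        apply hyneg
        rw [qsmul_eq] at hme; push_cast at hme; linarith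
      have hn2 : 2 ≤ |n| := two_le_abs_helper hn hn1 hnn1
      have hnpb : ¬ pbRel φ (φ b) (n • φ b) := fun hh =>
        hs ((pb_global φ hy0 (one_ne_zero : (1:ℚ) ≠ 0) hn2 (by norm_num)).mp hh)
      rcases pb_or φ hy0 hn2 with hh | hh
      · exact absurd hh hnpb
      · rw [← hme] at hh
        exact iff_of_true ((pb_apply φ a b).mp hh) ⟨fun h => hxy h.symm, n, hn, hme⟩

lemma main_dichotomy (φ : zpmPowerGraph G ≃g zpmQ) :
    (∀ x y : G, dirZpm G x y ↔ dirQ (φ x) (φ y)) ∨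
    (∀ x y : G, dirZpm G x y ↔ dirQ (φ y) (φ x)) := by
  by_cases hs : pbRel φ (1:ℚ) ((2:ℤ) • (1:ℚ))
  · exact Or.inl (fun a b => main_pres φ hs a b)
  · exact Or.inr (fun a b => main_anti φ hs a b)

end Main
/-- If the Z±-power graph of a group `G` is isomorphic to that of `(ℚ,+)`, then every such
isomorphism is an isomorphism or an anti-isomorphism of the directed Z±-power graphs; in
particular the directed Z±-power graphs of `G` and `(ℚ,+)` are isomorphic. -/
theorem zpm_iso_rat_directed {G : Type*} [Group G]
    (h : Nonempty (zpmPowerGraph G ≃g zpmQ)) :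
    (∀ φ : zpmPowerGraph G ≃g zpmQ,
      (∀ x y : G, dirZpm G x y ↔ dirQ (φ x) (φ y)) ∨
      (∀ x y : G, dirZpm G x y ↔ dirQ (φ y) (φ x))) ∧
    Nonempty (dirZpm G ≃r dirQ) := by
  constructor
  · exact fun φ => main_dichotomy φ
  · obtain ⟨φ⟩ := h
    rcases main_dichotomy φ with hp | ha
    · exact ⟨⟨φ.toEquiv, fun {a b} => (hp a b).symm⟩⟩
    · refine ⟨⟨φ.toEquiv.trans (Equiv.inv ℚ), fun {a b} => ?_⟩⟩
      show dirQ (φ a)⁻¹ (φ b)⁻¹ ↔ dirZpm G a b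
      rw [← dirQ_inv_iff (φ b) (φ a)]
      exact (ha a b).symm
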